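/- For any subset S of ℝⁿ and any 0 ≤ m ≤ n, the m-dimensional Hausdorff measure of S is bounded above by a dimensional constant times the m-dimensional lower Minkowski content of S. In particular, if the lower Minkowski content vanishes, then H^m(S) = 0. -/

import Mathlib

open MeasureTheory Metric Filter
open scoped MeasureTheory ENNReal

namespace Stmt8Aux

/-- Half-open grid cube of side `δ` indexed by `z`. -/
def cube (n : ℕ) (δ : ℝ) (z : Fin n → ℤ) : Set (EuclideanSpace ℝ (Fin n)) :=
  (MeasurableEquiv.toLp 2 (Fin n → ℝ)).symm ⁻¹'
    (Set.univ.pi fun i => Set.Ico (δ * z i) (δ * z i + δ))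

lemma mem_cube {n : ℕ} {δ : ℝ} {z : Fin n → ℤ} {x : EuclideanSpace ℝ (Fin n)} :
    x ∈ cube n δ z ↔ ∀ i, δ * z i ≤ x i ∧ x i < δ * z i + δ := by
  simp [cube, Set.mem_pi]

lemma measurableSet_cube {n : ℕ} {δ : ℝ} {z : Fin n → ℤ} : MeasurableSet (cube n δ z) :=
  (MeasurableEquiv.toLp 2 (Fin n → ℝ)).symm.measurable
    (MeasurableSet.univ_pi fun _ => measurableSet_Ico)

lemma volume_cube {n : ℕ} {δ : ℝ} (z : Fin n → ℤ) :
    volume (cube n δ z) = ENNReal.ofReal δ ^ n := by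
  rw [cube, (EuclideanSpace.volume_preserving_symm_measurableEquiv_toLp (Fin n)).measure_preimage
      ((MeasurableSet.univ_pi fun _ => measurableSet_Ico).nullMeasurableSet)]
  simp [volume_pi_pi, Real.volume_Ico]

lemma eq_floor_of_mem_cube {n : ℕ} {δ : ℝ} (hδ : 0 < δ) {z : Fin n → ℤ}
    {x : EuclideanSpace ℝ (Fin n)} (hx : x ∈ cube n δ z) :
    z = fun i => ⌊x i / δ⌋ := by
  funext i
  obtain ⟨h1, h2⟩ := mem_cube.1 hx i
  refine (Int.floor_eq_iff.2 ⟨?_, ?_⟩).symm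
  · rw [le_div_iff₀ hδ]; linarith [h1]
  · rw [div_lt_iff₀ hδ]; push_cast; linarith [h2]

lemma mem_cube_floor {n : ℕ} {δ : ℝ} (hδ : 0 < δ) (x : EuclideanSpace ℝ (Fin n)) :
    x ∈ cube n δ (fun i => ⌊x i / δ⌋) := by
  rw [mem_cube]
  intro i
  constructor
  · calc δ * ↑⌊x i / δ⌋ ≤ δ * (x i / δ) :=
        mul_le_mul_of_nonneg_left (Int.floor_le _) hδ.le
      _ = x i := by field_simp
  · have h := Int.lt_floor_add_one (x i / δ)
    have := (div_lt_iff₀ hδ).1 h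
    push_cast at this ⊢
    linarith [this]

lemma pairwise_disjoint_cube {n : ℕ} {δ : ℝ} (hδ : 0 < δ) :
    Pairwise (Function.onFun Disjoint fun z : Fin n → ℤ => cube n δ z) := by
  intro z z' hne
  refine Set.disjoint_left.2 fun x hx hx' => hne ?_
  rw [eq_floor_of_mem_cube hδ hx, eq_floor_of_mem_cube hδ hx']

lemma dist_le_of_mem_cube {n : ℕ} {δ : ℝ} (hδ : 0 < δ) {z : Fin n → ℤ}
    {x y : EuclideanSpace ℝ (Fin n)} (hx : x ∈ cube n δ z) (hy : y ∈ cube n δ z) :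
    dist x y ≤ Real.sqrt n * δ := by
  rw [EuclideanSpace.dist_eq]
  have key : ∀ i, dist (x i) (y i) ^ 2 ≤ δ ^ 2 := by
    intro i
    obtain ⟨hx1, hx2⟩ := mem_cube.1 hx i
    obtain ⟨hy1, hy2⟩ := mem_cube.1 hy i
    rw [Real.dist_eq, sq_abs]
    nlinarith
  calc Real.sqrt (∑ i, dist (x i) (y i) ^ 2) ≤ Real.sqrt (n * δ ^ 2) := by
        apply Real.sqrt_le_sqrt
        calc (∑ i, dist (x i) (y i) ^ 2) ≤ ∑ _i : Fin n, δ ^ 2 :=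
            Finset.sum_le_sum fun i _ => key i
          _ = n * δ ^ 2 := by simp [Finset.sum_const, mul_comm]
    _ = Real.sqrt n * δ := by
        rw [Real.sqrt_mul (Nat.cast_nonneg n), Real.sqrt_sq hδ.le]

lemma diam_cube_le {n : ℕ} {δ : ℝ} (hδ : 0 < δ) (z : Fin n → ℤ) :
    EMetric.diam (cube n δ z) ≤ ENNReal.ofReal (Real.sqrt n * δ) := by
  refine EMetric.diam_le fun x hx y hy => ?_
  rw [edist_dist]
  exact ENNReal.ofReal_le_ofReal (dist_le_of_mem_cube hδ hx hy)


lemma real_calc {ε c : ℝ} (hε : 0 < ε) (hc : 0 < c) (m : ℝ) (n : ℕ) :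
    ε ^ m / (ε / c) ^ n = c ^ (n : ℝ) / ε ^ ((n : ℝ) - m) := by
  rw [← Real.rpow_natCast (ε / c) n, Real.div_rpow hε.le hc.le, div_div_eq_mul_div,
    Real.rpow_sub hε, div_div_eq_mul_div]
  ring

end Stmt8Aux

/-- The m-dimensional Hausdorff measure of S ⊆ ℝⁿ is bounded by a dimensional constant times the
m-dimensional lower Minkowski content; in particular vanishing content forces H^m(S) = 0. -/
theorem stmt8 (n : ℕ) (m : ℝ) (hm0 : 0 ≤ m) (hmn : m ≤ n) :
    ∃ C : ENNReal, C ≠ ⊤ ∧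
      (∀ S : Set (EuclideanSpace ℝ (Fin n)),
        μH[m] S ≤ C * Filter.liminf
          (fun ε : ℝ => volume (Metric.thickening ε S) / ENNReal.ofReal (ε ^ ((n : ℝ) - m)))
          (nhdsWithin 0 (Set.Ioi 0))) ∧
      (∀ S : Set (EuclideanSpace ℝ (Fin n)),
        Filter.liminf
          (fun ε : ℝ => volume (Metric.thickening ε S) / ENNReal.ofReal (ε ^ ((n : ℝ) - m)))
          (nhdsWithin 0 (Set.Ioi 0)) = 0 → μH[m] S = 0) := by
  classical
  set s : ℝ := Real.sqrt n with hs_def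
  have hs0 : 0 ≤ s := Real.sqrt_nonneg _
  set c : ℝ := s + 1 with hc_def
  have hc0 : 0 < c := by positivity
  set C : ℝ≥0∞ := ENNReal.ofReal (c ^ (n : ℝ)) with hC_def
  have hCtop : C ≠ ⊤ := ENNReal.ofReal_ne_top
  have hC0 : C ≠ 0 := by
    simp only [hC_def, ne_eq, ENNReal.ofReal_eq_zero, not_le]
    exact Real.rpow_pos_of_pos hc0 _
  have main : ∀ S : Set (EuclideanSpace ℝ (Fin n)),
      μH[m] S ≤ C * Filter.liminf
        (fun ε : ℝ => volume (Metric.thickening ε S) / ENNReal.ofReal (ε ^ ((n : ℝ) - m)))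
        (nhdsWithin 0 (Set.Ioi 0)) := by
    intro S
    set g : ℝ → ℝ≥0∞ := fun ε =>
      volume (Metric.thickening ε S) / ENNReal.ofReal (ε ^ ((n : ℝ) - m)) with hg_def
    set T : ℝ → Type := fun ε => {z : Fin n → ℤ // (Stmt8Aux.cube n (ε / c) z ∩ S).Nonempty}
      with hT_def
    have hTc : ∀ ε, Countable (T ε) := fun ε => Subtype.countable
    set t : ∀ ε : ℝ, T ε → Set (EuclideanSpace ℝ (Fin n)) :=
      fun ε z => Stmt8Aux.cube n (ε / c) z.1 with ht_def
    have hr : Filter.Tendsto (fun ε : ℝ => ENNReal.ofReal ε) (nhdsWithin 0 (Set.Ioi 0))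
        (nhds 0) := by
      have h : Filter.Tendsto (fun ε : ℝ => ENNReal.ofReal ε) (nhds 0) (nhds 0) := by
        simpa using ENNReal.continuous_ofReal.tendsto (0 : ℝ)
      exact h.mono_left nhdsWithin_le_nhds
    have hsc : s < c := by rw [hc_def]; linarith
    have hdε : ∀ ε : ℝ, 0 < ε → ∀ z : Fin n → ℤ,
        EMetric.diam (Stmt8Aux.cube n (ε / c) z) ≤ ENNReal.ofReal ε := by
      intro ε hε z
      have hδ : 0 < ε / c := div_pos hε hc0
      refine (Stmt8Aux.diam_cube_le hδ z).trans (ENNReal.ofReal_le_ofReal ?_)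
      rw [mul_div_assoc', div_le_iff₀ hc0]
      nlinarith [mul_le_mul_of_nonneg_right hsc.le hε.le]
    have hdiam : ∀ᶠ ε in nhdsWithin (0:ℝ) (Set.Ioi 0), ∀ i : T ε,
        EMetric.diam (t ε i) ≤ ENNReal.ofReal ε := by
      filter_upwards [self_mem_nhdsWithin] with ε (hε : 0 < ε) i
      exact hdε ε hε i.1
    have hcover : ∀ᶠ ε in nhdsWithin (0:ℝ) (Set.Ioi 0), S ⊆ ⋃ i : T ε, t ε i := by
      filter_upwards [self_mem_nhdsWithin] with ε (hε : 0 < ε)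
      intro x hx
      have hδ : 0 < ε / c := div_pos hε hc0
      have hmem := Stmt8Aux.mem_cube_floor hδ x
      exact Set.mem_iUnion.2 ⟨⟨fun i => ⌊x i / (ε / c)⌋, ⟨x, hmem, hx⟩⟩, hmem⟩
    have h1 : μH[m] S ≤ Filter.liminf
        (fun ε => ∑' i : T ε, EMetric.diam (t ε i) ^ m) (nhdsWithin 0 (Set.Ioi 0)) :=
      MeasureTheory.Measure.hausdorffMeasure_le_liminf_tsum m S
        (fun ε => ENNReal.ofReal ε) hr t hdiam hcover
    have key : ∀ ε : ℝ, 0 < ε →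
        (∑' i : T ε, EMetric.diam (t ε i) ^ m) ≤ C * g ε := by
      intro ε hε
      set δ : ℝ := ε / c with hδ_def
      have hδ : 0 < δ := div_pos hε hc0
      set V : ℝ≥0∞ := volume (Metric.thickening ε S) with hV_def
      set N : ℝ≥0∞ := ∑' _i : T ε, (1 : ℝ≥0∞) with hN_def
      have hsub : ∀ i : T ε, t ε i ⊆ Metric.thickening ε S := by
        rintro ⟨z, ⟨y, hy, hyS⟩⟩ x hx
        rw [Metric.mem_thickening_iff]
        refine ⟨y, hyS, lt_of_le_of_lt (Stmt8Aux.dist_le_of_mem_cube hδ hx hy) ?_⟩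
        rw [mul_div_assoc', div_lt_iff₀ hc0]
        nlinarith [mul_lt_mul_of_pos_right hsc hε]
      have tsum_const_eq : ∀ a : ℝ≥0∞, (∑' _i : T ε, a) = a * N := by
        intro a
        rw [hN_def, ← ENNReal.tsum_mul_left]
        simp
      have hvol : ENNReal.ofReal δ ^ n * N ≤ V := by
        have hdisj : Pairwise (Function.onFun Disjoint fun i : T ε => t ε i) := by
          intro i j hij
          exact Stmt8Aux.pairwise_disjoint_cube hδ (fun h => hij (Subtype.ext h))
        have hmeas : ∀ i : T ε, MeasurableSet (t ε i) := fun i => Stmt8Aux.measurableSet_cube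
        calc ENNReal.ofReal δ ^ n * N = ∑' _i : T ε, ENNReal.ofReal δ ^ n :=
              (tsum_const_eq _).symm
          _ = ∑' i : T ε, volume (t ε i) := by
              refine tsum_congr fun i => ?_
              rw [ht_def, Stmt8Aux.volume_cube]
          _ = volume (⋃ i : T ε, t ε i) := (measure_iUnion hdisj hmeas).symm
          _ ≤ V := measure_mono (Set.iUnion_subset hsub)
      have hD0 : (ENNReal.ofReal δ : ℝ≥0∞) ^ n ≠ 0 :=
        pow_ne_zero _ (ENNReal.ofReal_pos.2 hδ).ne'
      have hDtop : (ENNReal.ofReal δ : ℝ≥0∞) ^ n ≠ ⊤ :=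
        ENNReal.pow_ne_top ENNReal.ofReal_ne_top
      have hN : N ≤ V / ENNReal.ofReal δ ^ n :=
        (ENNReal.le_div_iff_mul_le (Or.inl hD0) (Or.inl hDtop)).2
          (by rw [mul_comm]; exact hvol)
      have hsum : (∑' i : T ε, EMetric.diam (t ε i) ^ m) ≤ ENNReal.ofReal ε ^ m * N := by
        calc (∑' i : T ε, EMetric.diam (t ε i) ^ m)
            ≤ ∑' _i : T ε, ENNReal.ofReal ε ^ m :=
              ENNReal.tsum_le_tsum fun i => ENNReal.rpow_le_rpow (hdε ε hε i.1) hm0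
          _ = ENNReal.ofReal ε ^ m * N := tsum_const_eq _
      have harith : ENNReal.ofReal ε ^ m * (V / ENNReal.ofReal δ ^ n) = C * g ε := by
        rw [hg_def]
        simp only [← hV_def]
        rw [ENNReal.ofReal_rpow_of_pos hε, ← ENNReal.ofReal_pow hδ.le]
        rw [show ENNReal.ofReal (ε ^ m) * (V / ENNReal.ofReal (δ ^ n))
              = ENNReal.ofReal (ε ^ m) / ENNReal.ofReal (δ ^ n) * V by
            rw [div_eq_mul_inv, div_eq_mul_inv]; ring]
        rw [← ENNReal.ofReal_div_of_pos (pow_pos hδ n), hδ_def,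
          Stmt8Aux.real_calc hε hc0 m n,
          ENNReal.ofReal_div_of_pos (Real.rpow_pos_of_pos hε _), ← hC_def]
        rw [div_eq_mul_inv, div_eq_mul_inv]; ring
      calc (∑' i : T ε, EMetric.diam (t ε i) ^ m) ≤ ENNReal.ofReal ε ^ m * N := hsum
        _ ≤ ENNReal.ofReal ε ^ m * (V / ENNReal.ofReal δ ^ n) := mul_le_mul_right hN _
        _ = C * g ε := harith
    have h2 : Filter.liminf (fun ε => ∑' i : T ε, EMetric.diam (t ε i) ^ m)
          (nhdsWithin 0 (Set.Ioi 0))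
        ≤ Filter.liminf (fun ε => C * g ε) (nhdsWithin 0 (Set.Ioi 0)) := by
      refine Filter.liminf_le_liminf ?_
      filter_upwards [self_mem_nhdsWithin] with ε (hε : 0 < ε)
      exact key ε hε
    have h3 : Filter.liminf (fun ε => C * g ε) (nhdsWithin (0:ℝ) (Set.Ioi 0))
        ≤ C * Filter.liminf g (nhdsWithin 0 (Set.Ioi 0)) := by
      have h := ENNReal.liminf_mul_le (f := nhdsWithin (0:ℝ) (Set.Ioi 0))
        (u := fun _ => C) (v := g)
        (Or.inl (by rw [Filter.limsup_const]; exact hC0))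
        (Or.inl (by rw [Filter.limsup_const]; exact hCtop))
      rw [Filter.limsup_const] at h
      exact h
    exact h1.trans (h2.trans h3)
  refine ⟨C, hCtop, main, fun S h0 => ?_⟩
  have h := main S
  rw [h0, mul_zero] at h
  exact le_antisymm h (zero_le)
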